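/- Let j < k be natural numbers, e_j : Ω → ℝⁿ and v : Ω → ℝ^l zero-mean square-integrable random vectors, and v'_ℓ : Ω → ℝⁿ (ℓ = j,…,k−1) zero-mean square-integrable random vectors. Let Φ_ℓ (n×n) be real matrices, define Φ_{k|i} = Φ_{k−1}⋯Φ_i for i ≤ k−1 and Φ_{k|k} = I, and set e_k = Φ_{k|j} e_j + Σ_{ℓ=j}^{k−1} Φ_{k|ℓ+1} v'_ℓ. Suppose E[v'_ℓ e_jᵀ] = 0 and E[v'_ℓ vᵀ] = 0 for all ℓ with j < ℓ ≤ k−1, and E[v'_j e_jᵀ] = N, E[v'_j vᵀ] = N', E[e_j e_jᵀ] = P, E[e_j vᵀ] = K for given matrices N, N', P, K. Then E[e_k e_jᵀ] = Φ_{k|j+1}(Φ_j P + N) and E[e_k vᵀ] = Φ_{k|j+1}(Φ_j K + N') (cross-covariance propagation along the filter error recursion, used in the proof of Theorem 1). -/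

import Mathlib

open MeasureTheory Matrix
open scoped ProbabilityTheory

/-- Cross-covariance matrix `E[X Yᵀ]` of two (zero-mean) random vectors. -/
noncomputable def crossCov {Ω : Type*} [MeasureSpace Ω]
    {a b : ℕ} (X : Ω → Fin a → ℝ) (Y : Ω → Fin b → ℝ) : Matrix (Fin a) (Fin b) ℝ :=
  Matrix.of fun i j => ∫ ω, X ω i * Y ω j

/-- `chain Φ i k = Φ_{k-1} ⋯ Φ_i` (equal to `1` when `k ≤ i`), i.e. the state-transition
matrix `Φ_{k|i}` of the error system. -/
def chain {n : ℕ} (Φ : ℕ → Matrix (Fin n) (Fin n) ℝ) (i : ℕ) : ℕ → Matrix (Fin n) (Fin n) ℝ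
  | 0 => 1
  | m + 1 => if i ≤ m then Φ m * chain Φ i m else 1

/-- Products of L² functions are integrable. -/
lemma integrable_mul_of_memL2 {Ω : Type*} [MeasureSpace Ω] {f g : Ω → ℝ}
    (hf : MemLp f 2 ℙ) (hg : MemLp g 2 ℙ) :
    Integrable (fun ω => f ω * g ω) ℙ := by
  have h : MemLp (f • g) 1 ℙ := hg.smul hf
  rw [← memLp_one_iff_integrable]
  exact h

lemma chain_of_le {n : ℕ} (Φ : ℕ → Matrix (Fin n) (Fin n) ℝ) {i m : ℕ} (h : m ≤ i) :
    chain Φ i m = 1 := by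
  cases m with
  | zero => rfl
  | succ m => simp [chain, Nat.not_le.mpr (Nat.lt_of_succ_le h)]

lemma chain_succ_left {n : ℕ} (Φ : ℕ → Matrix (Fin n) (Fin n) ℝ) {i k : ℕ} (h : i < k) :
    chain Φ i k = chain Φ (i + 1) k * Φ i := by
  induction k with
  | zero => omega
  | succ m ih =>
    rcases Nat.lt_or_ge i m with him | him
    · have h1 : i ≤ m := le_of_lt him
      have h2 : i + 1 ≤ m := him
      simp only [chain, if_pos h1, if_pos h2, ih him, Matrix.mul_assoc]
    · have : i = m := le_antisymm (Nat.lt_succ_iff.mp h) him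
      subst this
      simp [chain, chain_of_le Φ (le_refl i), chain_of_le Φ (Nat.le_succ i)]

/-- Each component of `A *ᵥ X` is in L². -/
lemma memL2_mulVec {Ω : Type*} [MeasureSpace Ω] {a c : ℕ}
    (A : Matrix (Fin a) (Fin c) ℝ) (X : Ω → Fin c → ℝ)
    (hX : ∀ p, MemLp (fun ω => X ω p) 2 ℙ) (i : Fin a) :
    MemLp (fun ω => (A *ᵥ X ω) i) 2 ℙ := by
  simp only [Matrix.mulVec, dotProduct]
  have h := memLp_finset_sum' Finset.univ (fun p _ => (hX p).const_mul (A i p))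
  have heq : (∑ p : Fin c, fun ω => A i p * X ω p) = fun ω => ∑ p : Fin c, A i p * X ω p := by
    ext ω; simp
  rwa [heq] at h

/-- `crossCov` pulls matrices out on the left. -/
lemma crossCov_mulVec {Ω : Type*} [MeasureSpace Ω] {a b c : ℕ}
    (A : Matrix (Fin a) (Fin c) ℝ) (X : Ω → Fin c → ℝ) (Y : Ω → Fin b → ℝ)
    (hX : ∀ p, MemLp (fun ω => X ω p) 2 ℙ) (hY : ∀ q, MemLp (fun ω => Y ω q) 2 ℙ) :
    crossCov (fun ω => A *ᵥ X ω) Y = A * crossCov X Y := by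
  ext i q
  simp only [crossCov, Matrix.mul_apply, Matrix.of_apply, Matrix.mulVec, dotProduct,
    Finset.sum_mul]
  rw [integral_finset_sum]
  · refine Finset.sum_congr rfl fun p _ => ?_
    simp_rw [mul_assoc]
    exact integral_const_mul (A i p) _
  · intro p _
    simp_rw [mul_assoc]
    exact (integrable_mul_of_memL2 (hX p) (hY q)).const_mul (A i p)

/-- Main computation, stated for a generic second argument `Y`. -/
lemma crossCov_propagation_aux {Ω : Type*} [MeasureSpace Ω]
    {n b : ℕ} (j k : ℕ) (hjk : j < k)
    (ej : Ω → Fin n → ℝ) (Y : Ω → Fin b → ℝ) (v' : ℕ → Ω → Fin n → ℝ)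
    (hej_meas : ∀ i, MemLp (fun ω => ej ω i) 2 ℙ)
    (hY_meas : ∀ i, MemLp (fun ω => Y ω i) 2 ℙ)
    (hv'_meas : ∀ ℓ, j ≤ ℓ → ℓ < k → ∀ i, MemLp (fun ω => v' ℓ ω i) 2 ℙ)
    (Φ : ℕ → Matrix (Fin n) (Fin n) ℝ)
    (M : Matrix (Fin n) (Fin b) ℝ) (Q : Matrix (Fin n) (Fin b) ℝ)
    (hzero : ∀ ℓ, j < ℓ → ℓ < k → crossCov (v' ℓ) Y = 0)
    (hMj : crossCov (v' j) Y = M) (hQ : crossCov ej Y = Q) :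
    crossCov (fun ω => chain Φ j k *ᵥ ej ω + ∑ ℓ ∈ Finset.Ico j k, chain Φ (ℓ + 1) k *ᵥ v' ℓ ω) Y
      = chain Φ (j + 1) k * (Φ j * Q + M) := by
  -- step 1: split the sum entrywise
  have key : crossCov
      (fun ω => chain Φ j k *ᵥ ej ω + ∑ ℓ ∈ Finset.Ico j k, chain Φ (ℓ + 1) k *ᵥ v' ℓ ω) Y
      = chain Φ j k * crossCov ej Y
        + ∑ ℓ ∈ Finset.Ico j k, chain Φ (ℓ + 1) k * crossCov (v' ℓ) Y := by
    ext i q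
    have hint1 : Integrable (fun ω => (chain Φ j k *ᵥ ej ω) i * Y ω q) ℙ :=
      integrable_mul_of_memL2 (memL2_mulVec _ _ hej_meas i) (hY_meas q)
    have hint2 : ∀ ℓ ∈ Finset.Ico j k,
        Integrable (fun ω => (chain Φ (ℓ + 1) k *ᵥ v' ℓ ω) i * Y ω q) ℙ := by
      intro ℓ hℓ
      rw [Finset.mem_Ico] at hℓ
      exact integrable_mul_of_memL2
        (memL2_mulVec _ _ (hv'_meas ℓ hℓ.1 hℓ.2) i) (hY_meas q)
    simp only [crossCov, Matrix.of_apply, Matrix.add_apply, Pi.add_apply,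
      Finset.sum_apply, Matrix.sum_apply, add_mul, Finset.sum_mul]
    rw [integral_add hint1 ((integrable_finset_sum _ hint2).congr
      (by filter_upwards with ω; simp [Finset.sum_mul]))]
    congr 1
    · have := congrFun (congrFun (crossCov_mulVec (chain Φ j k) ej Y hej_meas hY_meas) i) q
      simpa [crossCov] using this
    · rw [integral_finset_sum _ hint2]
      refine Finset.sum_congr rfl fun ℓ hℓ => ?_
      rw [Finset.mem_Ico] at hℓ
      have := congrFun (congrFun
        (crossCov_mulVec (chain Φ (ℓ + 1) k) (v' ℓ) Y (hv'_meas ℓ hℓ.1 hℓ.2) hY_meas) i) q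
      simpa [crossCov] using this
  rw [key, hQ]
  -- step 2: only the ℓ = j term survives
  have hsum : ∑ ℓ ∈ Finset.Ico j k, chain Φ (ℓ + 1) k * crossCov (v' ℓ) Y
      = chain Φ (j + 1) k * M := by
    rw [Finset.sum_eq_single_of_mem j (Finset.mem_Ico.mpr ⟨le_refl j, hjk⟩)]
    · rw [hMj]
    · intro ℓ hℓ hne
      rw [Finset.mem_Ico] at hℓ
      rw [hzero ℓ (lt_of_le_of_ne hℓ.1 (Ne.symm hne)) hℓ.2, Matrix.mul_zero]
  rw [hsum, chain_succ_left Φ hjk, Matrix.mul_add, Matrix.mul_assoc]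

/-- Cross-covariance propagation along the filter error recursion
`e_k = Φ_{k|j} e_j + Σ_{ℓ=j}^{k−1} Φ_{k|ℓ+1} v'_ℓ` (used in the proof of Theorem 1):
`E[e_k e_jᵀ] = Φ_{k|j+1}(Φ_j P + N)` and `E[e_k vᵀ] = Φ_{k|j+1}(Φ_j K + N')`. -/
theorem crossCov_propagation
    {Ω : Type*} [MeasureSpace Ω] [IsProbabilityMeasure (ℙ : Measure Ω)]
    {n l : ℕ} (j k : ℕ) (hjk : j < k)
    (ej : Ω → Fin n → ℝ) (v : Ω → Fin l → ℝ) (v' : ℕ → Ω → Fin n → ℝ)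
    (hej_meas : ∀ i, MemLp (fun ω => ej ω i) 2 ℙ)
    (hv_meas : ∀ i, MemLp (fun ω => v ω i) 2 ℙ)
    (hv'_meas : ∀ ℓ, j ≤ ℓ → ℓ < k → ∀ i, MemLp (fun ω => v' ℓ ω i) 2 ℙ)
    (hej_mean : ∀ i, ∫ ω, ej ω i = 0)
    (hv_mean : ∀ i, ∫ ω, v ω i = 0)
    (hv'_mean : ∀ ℓ, j ≤ ℓ → ℓ < k → ∀ i, ∫ ω, v' ℓ ω i = 0)
    (Φ : ℕ → Matrix (Fin n) (Fin n) ℝ)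
    (ek : Ω → Fin n → ℝ)
    (hek : ek = fun ω => chain Φ j k *ᵥ ej ω + ∑ ℓ ∈ Finset.Ico j k, chain Φ (ℓ + 1) k *ᵥ v' ℓ ω)
    (N P : Matrix (Fin n) (Fin n) ℝ)
    (N' K : Matrix (Fin n) (Fin l) ℝ)
    (hv'ej : ∀ ℓ, j < ℓ → ℓ < k → crossCov (v' ℓ) ej = 0)
    (hv'v : ∀ ℓ, j < ℓ → ℓ < k → crossCov (v' ℓ) v = 0)
    (hv'jej : crossCov (v' j) ej = N)
    (hv'jv : crossCov (v' j) v = N')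
    (hejej : crossCov ej ej = P)
    (hejv : crossCov ej v = K) :
    crossCov ek ej = chain Φ (j + 1) k * (Φ j * P + N) ∧
      crossCov ek v = chain Φ (j + 1) k * (Φ j * K + N') := by
  subst hek
  exact ⟨crossCov_propagation_aux j k hjk ej ej v' hej_meas hej_meas hv'_meas Φ N P
      hv'ej hv'jej hejej,
    crossCov_propagation_aux j k hjk ej v v' hej_meas hv_meas hv'_meas Φ N' K
      hv'v hv'jv hejv⟩
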